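/- superLL to SLL: let σ be the translation of {•,★}-formulas into {•}-formulas sending !_• to !, ?_• to ?, and erasing !_★ and ?_★ (σ(!_★ A) = σ(?_★ A) = σ(A)), fixing all other connectives. Then every sequent ⊢ Γ provable in the SLL instance of superLL (E = {•,★}; de(★) true only; co_k(★,…,★,•) true for all k ≥ 0 and nothing else; dg empty; p_n(•) and p_n(★) true for all n) has its translation ⊢ σ(Γ) provable in SLL; moreover if the superLL proof is cut-free then so is the obtained SLL proof. -/

import Mathlib

/-- Linear logic formulas with exponential connectives indexed by signatures in `E`. -/
inductive Formula (E : Type) : Type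
  | var : ℕ → Formula E
  | covar : ℕ → Formula E
  | tens : Formula E → Formula E → Formula E
  | parr : Formula E → Formula E → Formula E
  | one : Formula E
  | bot : Formula E
  | awith : Formula E → Formula E → Formula E
  | aplus : Formula E → Formula E → Formula E
  | top : Formula E
  | zero : Formula E
  | oc : E → Formula E → Formula E
  | wn : E → Formula E → Formula E

namespace Formula

/-- Duality on formulas. -/
def dual {E : Type} : Formula E → Formula E
  | var n => covar n
  | covar n => var n
  | tens A B => parr A.dual B.dual
  | parr A B => tens A.dual B.dual
  | one => bot
  | bot => one
  | awith A B => aplus A.dual B.dual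
  | aplus A B => awith A.dual B.dual
  | top => zero
  | zero => top
  | oc e A => wn e A.dual
  | wn e A => oc e A.dual

end Formula

/-- The sequent calculus superLL(E, de, co, dg, p).  The `Bool` index records whether
the cut rule may be used (`true` = cut allowed, `false` = cut-free proofs only). -/
inductive SuperLL {E : Type} (de : E → Prop) (co : List E → E → Prop)
    (dg : E → E → E → Prop) (p : ℕ → E → Prop) : Bool → List (Formula E) → Prop
  | ax (b) (A : Formula E) : SuperLL de co dg p b [A, A.dual]
  | ex {b Γ Δ} : SuperLL de co dg p b Γ → Γ.Perm Δ → SuperLL de co dg p b Δ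
  | cut {A : Formula E} {Γ Δ : List (Formula E)} : SuperLL de co dg p true (A :: Γ) →
      SuperLL de co dg p true (A.dual :: Δ) → SuperLL de co dg p true (Γ ++ Δ)
  | tens {b} {A B : Formula E} {Γ Δ : List (Formula E)} : SuperLL de co dg p b (A :: Γ) → SuperLL de co dg p b (B :: Δ) →
      SuperLL de co dg p b (A.tens B :: (Γ ++ Δ))
  | parr {b} {A B : Formula E} {Γ : List (Formula E)} : SuperLL de co dg p b (A :: B :: Γ) →
      SuperLL de co dg p b (A.parr B :: Γ)
  | one (b) : SuperLL de co dg p b [Formula.one]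
  | bot {b Γ} : SuperLL de co dg p b Γ → SuperLL de co dg p b (Formula.bot :: Γ)
  | awith {b} {A B : Formula E} {Γ : List (Formula E)} : SuperLL de co dg p b (A :: Γ) → SuperLL de co dg p b (B :: Γ) →
      SuperLL de co dg p b (A.awith B :: Γ)
  | aplus1 {b} {A B : Formula E} {Γ : List (Formula E)} : SuperLL de co dg p b (A :: Γ) →
      SuperLL de co dg p b (A.aplus B :: Γ)
  | aplus2 {b} {A B : Formula E} {Γ : List (Formula E)} : SuperLL de co dg p b (B :: Γ) →
      SuperLL de co dg p b (A.aplus B :: Γ)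
  | top (b) (Γ) : SuperLL de co dg p b (Formula.top :: Γ)
  | der {b e A Γ} : de e → SuperLL de co dg p b (A :: Γ) →
      SuperLL de co dg p b (Formula.wn e A :: Γ)
  | con {b} {l : List E} {e A Γ} : co l e →
      SuperLL de co dg p b (l.map (fun ei => Formula.wn ei A) ++ Γ) →
      SuperLL de co dg p b (Formula.wn e A :: Γ)
  | dig {b e1 e2 e A Γ} : dg e1 e2 e →
      SuperLL de co dg p b (Formula.wn e1 (Formula.wn e2 A) :: Γ) →
      SuperLL de co dg p b (Formula.wn e A :: Γ)
  | prom {b e A} {Δ : List (Formula E)} : p Δ.length e → SuperLL de co dg p b (A :: Δ) →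
      SuperLL de co dg p b (Formula.oc e A :: Δ.map (Formula.wn e))

/-- The two exponential signatures. -/
inductive Sig : Type
  | dot : Sig
  | star : Sig

inductive SLL : Bool → List (Formula Unit) → Prop
  | ax (b) (A : Formula Unit) : SLL b [A, A.dual]
  | ex {b Γ Δ} : SLL b Γ → Γ.Perm Δ → SLL b Δ
  | cut {A : Formula Unit} {Γ Δ : List (Formula Unit)} :
      SLL true (A :: Γ) → SLL true (A.dual :: Δ) → SLL true (Γ ++ Δ)
  | tens {b} {A B : Formula Unit} {Γ Δ : List (Formula Unit)} :
      SLL b (A :: Γ) → SLL b (B :: Δ) → SLL b (A.tens B :: (Γ ++ Δ))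
  | parr {b} {A B : Formula Unit} {Γ : List (Formula Unit)} :
      SLL b (A :: B :: Γ) → SLL b (A.parr B :: Γ)
  | one (b) : SLL b [Formula.one]
  | bot {b Γ} : SLL b Γ → SLL b (Formula.bot :: Γ)
  | awith {b} {A B : Formula Unit} {Γ : List (Formula Unit)} :
      SLL b (A :: Γ) → SLL b (B :: Γ) → SLL b (A.awith B :: Γ)
  | aplus1 {b} {A B : Formula Unit} {Γ : List (Formula Unit)} :
      SLL b (A :: Γ) → SLL b (A.aplus B :: Γ)
  | aplus2 {b} {A B : Formula Unit} {Γ : List (Formula Unit)} :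
      SLL b (B :: Γ) → SLL b (A.aplus B :: Γ)
  | top (b) (Γ) : SLL b (Formula.top :: Γ)
  | promf {b} {A : Formula Unit} {Δ : List (Formula Unit)} :
      SLL b (A :: Δ) → SLL b (Formula.oc () A :: Δ.map (Formula.wn ()))
  | mpx {b} (k : ℕ) {A : Formula Unit} {Γ : List (Formula Unit)} :
      SLL b (List.replicate k A ++ Γ) → SLL b (Formula.wn () A :: Γ)

/-- The SLL instance of superLL: `E = {•,★}`, `de(★)` only, `co_k(★,…,★,•)` for all
`k` and nothing else, `dg` empty, `p_n` full. -/
def deSLL : Sig → Prop := fun e => e = Sig.star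
def coSLL : List Sig → Sig → Prop := fun l e => (∀ x ∈ l, x = Sig.star) ∧ e = Sig.dot
def dgSLL : Sig → Sig → Sig → Prop := fun _ _ _ => False
def pSLL : ℕ → Sig → Prop := fun _ _ => True

/-- Translation of `{•,★}`-formulas into `{•}`-formulas sending `!_•` to `!`, `?_•` to
`?` and erasing `!_★`, `?_★`. -/
def sigma : Formula Sig → Formula Unit
  | Formula.var n => Formula.var n
  | Formula.covar n => Formula.covar n
  | Formula.tens A B => Formula.tens (sigma A) (sigma B)
  | Formula.parr A B => Formula.parr (sigma A) (sigma B)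
  | Formula.one => Formula.one
  | Formula.bot => Formula.bot
  | Formula.awith A B => Formula.awith (sigma A) (sigma B)
  | Formula.aplus A B => Formula.aplus (sigma A) (sigma B)
  | Formula.top => Formula.top
  | Formula.zero => Formula.zero
  | Formula.oc Sig.dot A => Formula.oc () (sigma A)
  | Formula.oc Sig.star A => sigma A
  | Formula.wn Sig.dot A => Formula.wn () (sigma A)
  | Formula.wn Sig.star A => sigma A

lemma sigma_dual : ∀ A : Formula Sig, sigma A.dual = (sigma A).dual := by
  intro A
  induction A with
  | oc e A ih => cases e <;> simp [Formula.dual, sigma, ih]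
  | wn e A ih => cases e <;> simp [Formula.dual, sigma, ih]
  | _ => simp_all [Formula.dual, sigma]

/-- superLL to SLL: every sequent provable in the SLL instance of superLL translates to
an SLL-provable sequent, preserving cut-freeness. -/
theorem superLL_to_SLL :
    ∀ (b : Bool) (Γ : List (Formula Sig)),
      SuperLL deSLL coSLL dgSLL pSLL b Γ → SLL b (Γ.map sigma) := by
  intro b Γ h
  induction h with
  | ax b A => simpa [sigma_dual] using SLL.ax b (sigma A)
  | ex _ hperm ih => exact SLL.ex ih (hperm.map sigma)
  | cut _ _ ih1 ih2 =>
      rw [List.map_append]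
      exact SLL.cut (by simpa using ih1) (by simpa [sigma_dual] using ih2)
  | tens _ _ ih1 ih2 =>
      rw [List.map_cons, List.map_append]
      exact SLL.tens (by simpa using ih1) (by simpa using ih2)
  | parr _ ih => exact SLL.parr (by simpa using ih)
  | one b => exact SLL.one b
  | bot _ ih => exact SLL.bot ih
  | awith _ _ ih1 ih2 => exact SLL.awith (by simpa using ih1) (by simpa using ih2)
  | aplus1 _ ih => exact SLL.aplus1 (by simpa using ih)
  | aplus2 _ ih => exact SLL.aplus2 (by simpa using ih)
  | top b Γ => exact SLL.top b _
  | der hde _ ih =>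
      rcases hde with rfl
      simpa [sigma] using ih
  | @con b l e A Γ' hco _ ih =>
      obtain ⟨hl, rfl⟩ := hco
      have : (List.map (fun ei => Formula.wn ei A) l).map sigma
          = List.replicate l.length (sigma A) := by
        rw [List.map_map,
          show l.length = (l.map (sigma ∘ fun ei => Formula.wn ei A)).length by simp]
        apply List.eq_replicate_of_mem
        intro x hx
        simp only [List.mem_map] at hx
        obtain ⟨e, he, rfl⟩ := hx
        rw [hl e he]; rfl
      simp only [List.map_cons, List.map_append, this, sigma] at ih ⊢
      exact SLL.mpx l.length ih
  | dig hdg _ ih => exact absurd hdg (by intro h; exact h)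
  | @prom b e A Δ hp _ ih =>
      cases e with
      | dot =>
          simp only [List.map_cons, List.map_map, sigma]
          have := SLL.promf (b := b) (A := sigma A) (Δ := Δ.map sigma) (by simpa using ih)
          simpa [List.map_map, Function.comp, sigma, show sigma ∘ Formula.wn Sig.dot = Formula.wn () ∘ sigma from funext fun x => rfl] using this
      | star =>
          simp only [List.map_cons, List.map_map, sigma]
          have : sigma ∘ Formula.wn Sig.star = sigma := funext fun x => rfl
          rw [this]
          simpa using ih
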